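/- If {F_k} is a total pairwise orthogonal family in the infinite-dimensional simplex S, then there is a bijection π : ℕ → ℕ such that F_k = e_{π(k)} for all k, i.e., {F_k} is a permutation of the standard basis. -/

import Mathlib

open Function

def IsSimplexPt (x : ℕ → ℝ) : Prop := (∀ i, 0 ≤ x i) ∧ HasSum x 1

def Orth (x y : ℕ → ℝ) : Prop := Disjoint (support x) (support y)

def QSOCoef (P : ℕ → ℕ → ℕ → ℝ) : Prop :=
  (∀ i j k, 0 ≤ P i j k) ∧ (∀ i j k, P i j k = P j i k) ∧
  (∀ i j, HasSum (fun k => P i j k) 1)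

noncomputable def QSO (P : ℕ → ℕ → ℕ → ℝ) (x : ℕ → ℝ) : ℕ → ℝ :=
  fun k => ∑' i, ∑' j, P i j k * x i * x j

def IsOP (V : (ℕ → ℝ) → (ℕ → ℝ)) : Prop :=
  ∀ x y, IsSimplexPt x → IsSimplexPt y → Orth x y → Orth (V x) (V y)

def stdBasis (k : ℕ) : ℕ → ℝ := fun i => if i = k then 1 else 0

def IsTotalFam (F : ℕ → ℕ → ℝ) : Prop :=
  ∀ x : ℕ → ℝ, IsSimplexPt x →
    ∃ l : ℕ → ℝ, (∀ i, 0 ≤ l i) ∧ HasSum l 1 ∧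
      ∀ m, HasSum (fun i => l i * F i m) (x m)

lemma stdBasis_simplex (m : ℕ) : IsSimplexPt (stdBasis m) := by
  constructor
  · intro i; unfold stdBasis; split <;> norm_num
  · exact hasSum_ite_eq m (1:ℝ)

lemma stdBasis_inj : Function.Injective stdBasis := by
  intro a b h
  by_contra hne
  have := congrFun h a
  simp [stdBasis, hne] at this

lemma exists_basis (F : ℕ → ℕ → ℝ) (hF : ∀ k, IsSimplexPt (F k))
    (htot : IsTotalFam F) (m : ℕ) : ∃ i, F i = stdBasis m := by
  obtain ⟨l, hl0, hlsum, hlF⟩ := htot (stdBasis m) (stdBasis_simplex m)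
  have hex : ∃ i, l i ≠ 0 := by
    by_contra h
    push_neg at h
    have h0 : HasSum l 0 := by
      have : l = 0 := funext h
      rw [this]; exact hasSum_zero
    exact one_ne_zero (hlsum.unique h0)
  obtain ⟨i, hi⟩ := hex
  have hzero : ∀ n, n ≠ m → F i n = 0 := by
    intro n hn
    have h0 : HasSum (fun j => l j * F j n) 0 := by
      simpa [stdBasis, hn] using hlF n
    have hnn : ∀ j, 0 ≤ l j * F j n := fun j => mul_nonneg (hl0 j) ((hF j).1 n)
    have := (hasSum_zero_iff_of_nonneg hnn).mp h0
    have hterm : l i * F i n = 0 := congrFun this i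
    rcases mul_eq_zero.mp hterm with h | h
    · exact absurd h hi
    · exact h
  have hone : F i m = 1 := by
    have hs : HasSum (F i) (F i m) := hasSum_single m (fun n hn => hzero n hn)
    exact ((hF i).2.unique hs).symm
  refine ⟨i, funext fun n => ?_⟩
  by_cases hn : n = m
  · subst hn; simpa [stdBasis] using hone
  · simp [stdBasis, hn, hzero n hn]

theorem total_is_permuted_basis (F : ℕ → ℕ → ℝ)
    (hF : ∀ k, IsSimplexPt (F k))
    (horth : ∀ i j : ℕ, i ≠ j → Orth (F i) (F j))
    (htot : IsTotalFam F) :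
    ∃ π : ℕ ≃ ℕ, ∀ k, F k = stdBasis (π k) := by
  have key : ∀ k, ∃ m, F k = stdBasis m := by
    intro k
    have hsupp : ∃ m, F k m ≠ 0 := by
      by_contra h
      push_neg at h
      have h0 : HasSum (F k) 0 := by
        have : F k = 0 := funext h
        rw [this]; exact hasSum_zero
      exact one_ne_zero ((hF k).2.unique h0)
    obtain ⟨m, hm⟩ := hsupp
    obtain ⟨i, hi⟩ := exists_basis F hF htot m
    have hik : i = k := by
      by_contra h
      have hd := horth i k h
      have him : m ∈ support (F i) := by
        simp [hi, stdBasis]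
      have hkm : m ∈ support (F k) := hm
      exact Set.disjoint_left.mp hd him hkm
    exact ⟨m, hik ▸ hi⟩
  choose g hg using key
  have hginj : Function.Injective g := by
    intro a b hab
    by_contra hne
    have hd := horth a b hne
    have ha : g a ∈ support (F a) := by simp [hg a, stdBasis]
    have hb : g a ∈ support (F b) := by simp [hg b, ← hab, stdBasis]
    exact Set.disjoint_left.mp hd ha hb
  have hgsurj : Function.Surjective g := by
    intro m
    obtain ⟨i, hi⟩ := exists_basis F hF htot m
    exact ⟨i, stdBasis_inj ((hg i).symm.trans hi)⟩
  exact ⟨Equiv.ofBijective g ⟨hginj, hgsurj⟩, hg⟩
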